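/- arXiv:1605.00481 — 2 statements merged into one kernel-verified Lean document; each statement's English description precedes it below -/
import Mathlib

section
/- Let a, b, c > 0 and define f(x,ξ) = e^{−π a x²} e^{−π b ξ²} e^{2πi c x·ξ} on R^{2d}, and let Φ(x,ξ) = e^{−π(x²+ξ²)}. Then the absolute value of the STFT of f with respect to Φ satisfies |V_Φ f(z,ζ)| = [(a+1)(b+1)+c²]^{−d/2} · exp(−π{[a(b+1)+c²]z₁² + [(a+1)b+c²]z₂² + (b+1)ζ₁² + (a+1)ζ₂² − 2c(z₁·ζ₂ + z₂·ζ₁)} / [(a+1)(b+1)+c²]), where z=(z₁,z₂), ζ=(ζ₁,ζ₂) ∈ R^{2d}. -/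
open MeasureTheory Complex
open scoped RealInnerProductSpace ENNReal NNReal
open Real

noncomputable section

abbrev Ed (d : ℕ) := EuclideanSpace ℝ (Fin d)

/-- `e2 t = e^{2 π i t}`. -/
def e2 (t : ℝ) : ℂ := Complex.exp (2 * Real.pi * t * Complex.I)

/-- Short-time Fourier transform on `ℝ^d` with window `g`:
`V_g f (x,ξ) = ∫ f(t) conj(g(t-x)) e^{-2πi ξ·t} dt`. -/
def STFT {d : ℕ} (g f : Ed d → ℂ) (x ξ : Ed d) : ℂ :=
  ∫ t, f t * starRingEnd ℂ (g (t - x)) * e2 (-⟪ξ, t⟫)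

/-- Cross-Wigner distribution
`W(f,g)(x,ξ) = ∫ f(x+t/2) conj(g(x-t/2)) e^{-2πi ξ·t} dt`. -/
def Wig {d : ℕ} (f g : Ed d → ℂ) (x ξ : Ed d) : ℂ :=
  ∫ t, f (x + (2:ℝ)⁻¹ • t) * starRingEnd ℂ (g (x - (2:ℝ)⁻¹ • t)) * e2 (-⟪ξ, t⟫)

/-- Cross-Wigner distribution as a function on `ℝ^{2d}`. -/
def WigF {d : ℕ} (f g : Ed d → ℂ) : Ed d × Ed d → ℂ := fun w => Wig f g w.1 w.2

/-- Cross-ambiguity function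
`A(f,g)(x,ξ) = ∫ e^{-2πi t·ξ} f(t+x/2) conj(g(t-x/2)) dt`. -/
def Amb {d : ℕ} (f g : Ed d → ℂ) (x ξ : Ed d) : ℂ :=
  ∫ t, e2 (-⟪t, ξ⟫) * f (t + (2:ℝ)⁻¹ • x) * starRingEnd ℂ (g (t - (2:ℝ)⁻¹ • x))

/-- STFT on `ℝ^{2d}` with window `Φ`. -/
def STFT2 {d : ℕ} (Φ F : Ed d × Ed d → ℂ) (z ζ : Ed d × Ed d) : ℂ :=
  ∫ t : Ed d × Ed d,
    F t * starRingEnd ℂ (Φ (t - z)) * e2 (-(⟪ζ.1, t.1⟫ + ⟪ζ.2, t.2⟫))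

/-- Standard Gaussian `e^{-π x²}` on `ℝ^d`. -/
def gauss {d : ℕ} : Ed d → ℂ := fun x => (Real.exp (-(Real.pi * ‖x‖ ^ 2)) : ℝ)

/-- Standard Gaussian `e^{-π (x²+ξ²)}` on `ℝ^{2d}`. -/
def gauss2 {d : ℕ} : Ed d × Ed d → ℂ :=
  fun w => (Real.exp (-(Real.pi * (‖w.1‖ ^ 2 + ‖w.2‖ ^ 2))) : ℝ)

/-- `L^p` "norm" of an `ℝ≥0∞`-valued function, `p ∈ [1,∞]`. -/
def lpE {α : Type*} [MeasureSpace α] (p : ℝ≥0∞) (f : α → ℝ≥0∞) : ℝ≥0∞ :=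
  if p = ∞ then essSup f volume
  else (∫⁻ x, f x ^ p.toReal) ^ (1 / p.toReal)

/-- Weighted modulation space norm `M^{p,q}_m(ℝ^d)` (Gaussian window):
first integrate in `x` with exponent `p`, then in `ξ` with exponent `q`,
against the weight `m x ξ`. -/
def Mnorm {d : ℕ} (p q : ℝ≥0∞) (m : Ed d → Ed d → ℝ) (f : Ed d → ℂ) : ℝ≥0∞ :=
  lpE q fun ξ => lpE p fun x => (‖STFT gauss f x ξ‖₊ : ℝ≥0∞) * ENNReal.ofReal (m x ξ)

/-- Weighted modulation space norm `M^{p,q}_m(ℝ^{2d})` (Gaussian window). -/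
def M2norm {d : ℕ} (p q : ℝ≥0∞) (m : Ed d × Ed d → (Ed d × Ed d) → ℝ)
    (F : Ed d × Ed d → ℂ) : ℝ≥0∞ :=
  lpE q fun ζ => lpE p fun z =>
    (‖STFT2 gauss2 F z ζ‖₊ : ℝ≥0∞) * ENNReal.ofReal (m z ζ)

/-- The polynomial weight `v_s(z) = (1+|z|²)^{s/2}` on `ℝ^{2d}`. -/
def vs {d : ℕ} (s : ℝ) (w : Ed d × Ed d) : ℝ := (1 + (‖w.1‖ ^ 2 + ‖w.2‖ ^ 2)) ^ (s / 2)

/-- The weight `v_s` on phase space `ℝ^d × ℝ^d`, as a function of two variables. -/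
def vs1 {d : ℕ} (s : ℝ) (x ξ : Ed d) : ℝ := (1 + (‖x‖ ^ 2 + ‖ξ‖ ^ 2)) ^ (s / 2)



lemma key (d : ℕ) {B : ℝ} (hB : 0 < B) (c₁ c₂ : ℝ) (w₁ w₂ : Ed d) :
    ∫ v : Ed d, cexp ((-(B * ‖v‖ ^ 2) + c₁ * ⟪w₁, v⟫ : ℝ) + (c₂ * ⟪w₂, v⟫ : ℝ) * I) =
      ((π / B) ^ ((d : ℝ) / 2) : ℝ) *
        cexp (((c₁ ^ 2 * ‖w₁‖ ^ 2 - c₂ ^ 2 * ‖w₂‖ ^ 2) / (4 * B) : ℝ) +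
          ((2 * c₁ * c₂ * ⟪w₁, w₂⟫) / (4 * B) : ℝ) * I) := by
  have hmp := (EuclideanSpace.volume_preserving_symm_measurableEquiv_toLp (Fin d)).symm
  rw [← hmp.integral_comp (MeasurableEquiv.measurableEmbedding _)]
  have hBc : (0:ℝ) < ((B : ℂ)).re := by simpa using hB
  have key0 := GaussianFourier.integral_cexp_neg_mul_sum_add (ι := Fin d) hBc
      (fun i => ((c₁ * w₁ i : ℝ) : ℂ) + ((c₂ * w₂ i : ℝ) : ℂ) * I)
  have hnorm : ∀ y : Fin d → ℝ,
      ‖(MeasurableEquiv.toLp 2 (Fin d → ℝ)) y‖ ^ 2 = ∑ i, y i ^ 2 := by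
    intro y
    rw [EuclideanSpace.norm_eq, Real.sq_sqrt (by positivity)]
    simp [MeasurableEquiv.coe_toLp, sq_abs]
  have hinner : ∀ (w : Ed d) (y : Fin d → ℝ),
      ⟪w, (MeasurableEquiv.toLp 2 (Fin d → ℝ)) y⟫ = ∑ i, w i * y i := by
    intro w y
    simp [MeasurableEquiv.coe_toLp, PiLp.inner_apply, mul_comm]
  have hLHS : ∀ y : Fin d → ℝ,
      cexp ((-(B * ‖(MeasurableEquiv.toLp 2 (Fin d → ℝ)) y‖ ^ 2)
          + c₁ * ⟪w₁, (MeasurableEquiv.toLp 2 (Fin d → ℝ)) y⟫ : ℝ)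
          + (c₂ * ⟪w₂, (MeasurableEquiv.toLp 2 (Fin d → ℝ)) y⟫ : ℝ) * I) =
      cexp (-(B:ℂ) * ∑ i, (y i : ℂ) ^ 2 +
        ∑ i, (((c₁ * w₁ i : ℝ) : ℂ) + ((c₂ * w₂ i : ℝ) : ℂ) * I) * y i) := by
    intro y
    congr 1
    rw [hnorm, hinner, hinner]
    push_cast
    rw [neg_mul, add_assoc]
    congr 1
    rw [Finset.mul_sum, Finset.mul_sum, Finset.sum_mul, ← Finset.sum_add_distrib]
    exact Finset.sum_congr rfl fun i _ => by ring
  calc ∫ y : Fin d → ℝ, cexp ((-(B * ‖(MeasurableEquiv.toLp 2 (Fin d → ℝ)) y‖ ^ 2)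
          + c₁ * ⟪w₁, (MeasurableEquiv.toLp 2 (Fin d → ℝ)) y⟫ : ℝ)
          + (c₂ * ⟪w₂, (MeasurableEquiv.toLp 2 (Fin d → ℝ)) y⟫ : ℝ) * I)
      = ∫ y : Fin d → ℝ, cexp (-(B:ℂ) * ∑ i, (y i : ℂ) ^ 2 +
          ∑ i, (((c₁ * w₁ i : ℝ) : ℂ) + ((c₂ * w₂ i : ℝ) : ℂ) * I) * y i) := by
        exact integral_congr_ae (Filter.Eventually.of_forall hLHS)
    _ = (↑π / ↑B) ^ ((Fintype.card (Fin d) : ℂ) / 2) *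
          cexp ((∑ i, (((c₁ * w₁ i : ℝ) : ℂ) + ((c₂ * w₂ i : ℝ) : ℂ) * I) ^ 2) / (4 * B)) := key0
    _ = _ := by
        have h1 : ((↑π / ↑B : ℂ)) ^ ((Fintype.card (Fin d) : ℂ) / 2) =
            (((π / B) ^ ((d : ℝ) / 2) : ℝ) : ℂ) := by
          rw [Complex.ofReal_cpow (by positivity)]
          push_cast
          simp
        have h2 : (∑ i, (((c₁ * w₁ i : ℝ) : ℂ) + ((c₂ * w₂ i : ℝ) : ℂ) * I) ^ 2) =
            ((c₁ ^ 2 * ‖w₁‖ ^ 2 - c₂ ^ 2 * ‖w₂‖ ^ 2 : ℝ) : ℂ) +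
              ((2 * c₁ * c₂ * ⟪w₁, w₂⟫ : ℝ) : ℂ) * I := by
          have hw1 : ‖w₁‖ ^ 2 = ∑ i, w₁ i ^ 2 := by
            rw [EuclideanSpace.norm_eq, Real.sq_sqrt (by positivity)]; simp [sq_abs]
          have hw2 : ‖w₂‖ ^ 2 = ∑ i, w₂ i ^ 2 := by
            rw [EuclideanSpace.norm_eq, Real.sq_sqrt (by positivity)]; simp [sq_abs]
          have hw12 : ⟪w₁, w₂⟫ = ∑ i, w₁ i * w₂ i := by simp [PiLp.inner_apply, mul_comm]
          rw [hw1, hw2, hw12]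
          push_cast
          rw [Finset.mul_sum, Finset.mul_sum, Finset.mul_sum, ← Finset.sum_sub_distrib,
            Finset.sum_mul, ← Finset.sum_add_distrib]
          apply Finset.sum_congr rfl
          intro i _
          have : (I:ℂ)^2 = -1 := Complex.I_sq
          ring_nf
          rw [Complex.I_sq]
          ring
        rw [h1, h2, show ((4:ℂ) * (B:ℝ)) = ((4 * B : ℝ) : ℂ) by push_cast; ring, add_div,
          ← Complex.ofReal_div, mul_div_right_comm, ← Complex.ofReal_div]


lemma norm_cexp_mix (r s : ℝ) : ‖cexp ((r:ℂ) + (s:ℂ) * I)‖ = rexp r := by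
  rw [Complex.norm_exp]
  simp

lemma int_gauss_lin (d : ℕ) {B : ℝ} (hB : 0 < B) (u : Ed d) (r : ℝ) :
    Integrable (fun t : Ed d => rexp (-(B * ‖t‖ ^ 2) + ⟪u, t⟫ + r)) := by
  have h := (GaussianFourier.integrable_cexp_neg_mul_sq_norm_add (V := Ed d)
      (b := (B : ℂ)) (by simpa using hB) 1 u).norm
  have heq : ∀ t : Ed d, ‖cexp (-(B:ℂ) * ‖t‖ ^ 2 + 1 * ⟪u, t⟫)‖
      = rexp (-(B * ‖t‖ ^ 2) + ⟪u, t⟫) := by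
    intro t
    rw [Complex.norm_exp]
    have : ((-(B * ‖t‖ ^ 2) + ⟪u, t⟫ : ℝ) : ℂ) = -(B:ℂ) * ‖t‖ ^ 2 + 1 * ⟪u, t⟫ := by
      push_cast; ring
    rw [← this, Complex.ofReal_re]
  simp only [heq] at h
  have := h.mul_const (rexp r)
  simpa [← Real.exp_add] using this

set_option maxHeartbeats 2000000 in
/-- Modulus of the STFT of a generalized Gaussian with Gaussian window. -/
theorem stft_generalized_gaussian (d : ℕ) (a b c : ℝ) (ha : 0 < a) (hb : 0 < b) (hc : 0 < c) :
    ∀ z ζ : Ed d × Ed d,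
      ‖STFT2 gauss2
          (fun w : Ed d × Ed d =>
            ((Real.exp (-(Real.pi * a * ‖w.1‖ ^ 2)) : ℝ) : ℂ) *
              (Real.exp (-(Real.pi * b * ‖w.2‖ ^ 2)) : ℝ) * e2 (c * ⟪w.1, w.2⟫)) z ζ‖ =
        ((a + 1) * (b + 1) + c ^ 2) ^ (-(d : ℝ) / 2) *
          Real.exp (-(Real.pi *
            ((a * (b + 1) + c ^ 2) * ‖z.1‖ ^ 2 + ((a + 1) * b + c ^ 2) * ‖z.2‖ ^ 2 +
              (b + 1) * ‖ζ.1‖ ^ 2 + (a + 1) * ‖ζ.2‖ ^ 2 -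
              2 * c * (⟪z.1, ζ.2⟫ + ⟪z.2, ζ.1⟫)) /
            ((a + 1) * (b + 1) + c ^ 2))) := by
  intro z ζ
  have hb1 : (0:ℝ) < b + 1 := by linarith
  have ha1 : (0:ℝ) < a + 1 := by linarith
  have hK : (0:ℝ) < (a + 1) * (b + 1) + c ^ 2 := by positivity
  set K : ℝ := (a + 1) * (b + 1) + c ^ 2 with hKdef
  -- vectors for the second (outer) Gaussian integral
  set u₁ : Ed d := z.1 + (c / (b + 1)) • ζ.2 with hu₁
  set u₂ : Ed d := (c / (b + 1)) • z.2 - ζ.1 with hu₂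
  -- real and imaginary parts of the t1-dependent factor
  set Ar : Ed d → ℝ := fun t1 => -(π * a * ‖t1‖ ^ 2) - π * ‖t1 - z.1‖ ^ 2 - π * ‖z.2‖ ^ 2
    with hAr
  set Ai : Ed d → ℝ := fun t1 => -(2 * π * ⟪ζ.1, t1⟫) with hAi
  -- step 1 : rewrite the integrand
  have hstep1 : STFT2 gauss2
      (fun w : Ed d × Ed d =>
        ((Real.exp (-(Real.pi * a * ‖w.1‖ ^ 2)) : ℝ) : ℂ) *
          (Real.exp (-(Real.pi * b * ‖w.2‖ ^ 2)) : ℝ) * e2 (c * ⟪w.1, w.2⟫)) z ζ =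
      ∫ p : Ed d × Ed d, cexp ((Ar p.1 : ℝ) + (Ai p.1 : ℝ) * I) *
        cexp (((-(π * (b+1) * ‖p.2‖ ^ 2) + 2 * π * ⟪z.2, p.2⟫ : ℝ)) +
          ((2 * π * ⟪c • p.1 - ζ.2, p.2⟫ : ℝ)) * I) := by
    rw [STFT2]
    refine integral_congr_ae (Filter.Eventually.of_forall fun t => ?_)
    have hn : ∀ x y : Ed d, ‖x - y‖ ^ 2 = ‖x‖ ^ 2 - 2 * ⟪y, x⟫ + ‖y‖ ^ 2 := by
      intro x y
      rw [@norm_sub_sq_real, real_inner_comm]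
    have hsm : ⟪c • t.1 - ζ.2, t.2⟫ = c * ⟪t.1, t.2⟫ - ⟪ζ.2, t.2⟫ := by
      rw [inner_sub_left, real_inner_smul_left]
    simp only [gauss2, Prod.fst_sub, Prod.snd_sub]
    rw [Complex.conj_ofReal]
    simp only [e2, Complex.ofReal_exp, ← Complex.exp_add]
    congr 1
    simp only [hAr, hAi]
    rw [hsm, hn t.2 z.2]
    push_cast
    ring
  -- integrability
  have hφ : Integrable (fun t : Ed d => rexp (-(π * (a+1) * ‖t‖ ^ 2) + ⟪(2*π) • z.1, t⟫ +
      (-(π * ‖z.1‖ ^ 2) - π * ‖z.2‖ ^ 2))) := int_gauss_lin d (by positivity) _ _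
  have hψ : Integrable (fun t : Ed d => rexp (-(π * (b+1) * ‖t‖ ^ 2) + ⟪(2*π) • z.2, t⟫ + 0)) :=
    int_gauss_lin d (by positivity) _ _
  have hbound : Integrable (fun p : Ed d × Ed d =>
      rexp (-(π * (a+1) * ‖p.1‖ ^ 2) + ⟪(2*π) • z.1, p.1⟫ + (-(π * ‖z.1‖ ^ 2) - π * ‖z.2‖ ^ 2)) *
      rexp (-(π * (b+1) * ‖p.2‖ ^ 2) + ⟪(2*π) • z.2, p.2⟫ + 0)) := by
    rw [show (volume : Measure (Ed d × Ed d)) = Measure.prod volume volume from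
      Measure.volume_eq_prod _ _]
    exact hφ.mul_prod hψ
  have hn : ∀ x y : Ed d, ‖x - y‖ ^ 2 = ‖x‖ ^ 2 - 2 * ⟪y, x⟫ + ‖y‖ ^ 2 := by
    intro x y
    rw [@norm_sub_sq_real, real_inner_comm]
  have hnormG : ∀ p : Ed d × Ed d,
      ‖cexp ((Ar p.1 : ℝ) + (Ai p.1 : ℝ) * I) *
        cexp (((-(π * (b+1) * ‖p.2‖ ^ 2) + 2 * π * ⟪z.2, p.2⟫ : ℝ)) +
          ((2 * π * ⟪c • p.1 - ζ.2, p.2⟫ : ℝ)) * I)‖ =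
      rexp (-(π * (a+1) * ‖p.1‖ ^ 2) + ⟪(2*π) • z.1, p.1⟫ + (-(π * ‖z.1‖ ^ 2) - π * ‖z.2‖ ^ 2)) *
      rexp (-(π * (b+1) * ‖p.2‖ ^ 2) + ⟪(2*π) • z.2, p.2⟫ + 0) := by
    intro p
    rw [norm_mul, norm_cexp_mix, norm_cexp_mix]
    congr 1
    · simp only [hAr]
      rw [hn p.1 z.1, real_inner_smul_left]
      ring
    · rw [real_inner_smul_left]
      ring
  have hG_cont : Continuous (fun p : Ed d × Ed d =>
      cexp ((Ar p.1 : ℝ) + (Ai p.1 : ℝ) * I) *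
        cexp (((-(π * (b+1) * ‖p.2‖ ^ 2) + 2 * π * ⟪z.2, p.2⟫ : ℝ)) +
          ((2 * π * ⟪c • p.1 - ζ.2, p.2⟫ : ℝ)) * I)) := by
    simp only [hAr, hAi]
    have h1 : Continuous fun p : Ed d × Ed d => (inner ℝ (c • p.1 - ζ.2) p.2 : ℝ) :=
      by fun_prop
    have h2 : Continuous fun p : Ed d × Ed d => (inner ℝ ζ.1 p.1 : ℝ) :=
      Continuous.inner continuous_const continuous_fst
    have h3 : Continuous fun p : Ed d × Ed d => (inner ℝ z.2 p.2 : ℝ) :=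
      Continuous.inner continuous_const continuous_snd
    have h4 : Continuous fun p : Ed d × Ed d =>
        -(π * a * ‖p.1‖ ^ 2) - π * ‖p.1 - z.1‖ ^ 2 - π * ‖z.2‖ ^ 2 := by fun_prop
    have h5 : Continuous fun p : Ed d × Ed d =>
        -(π * (b + 1) * ‖p.2‖ ^ 2) + 2 * π * (inner ℝ z.2 p.2 : ℝ) := by fun_prop
    apply Continuous.mul
    · exact Complex.continuous_exp.comp
        ((Complex.continuous_ofReal.comp h4).add
          ((Complex.continuous_ofReal.comp (by fun_prop)).mul continuous_const))
    · exact Complex.continuous_exp.comp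
        ((Complex.continuous_ofReal.comp h5).add
          ((Complex.continuous_ofReal.comp (continuous_const.mul h1)).mul continuous_const))
  have hInt : Integrable (fun p : Ed d × Ed d =>
      cexp ((Ar p.1 : ℝ) + (Ai p.1 : ℝ) * I) *
        cexp (((-(π * (b+1) * ‖p.2‖ ^ 2) + 2 * π * ⟪z.2, p.2⟫ : ℝ)) +
          ((2 * π * ⟪c • p.1 - ζ.2, p.2⟫ : ℝ)) * I)) :=
    hbound.mono' hG_cont.aestronglyMeasurable
      (Filter.Eventually.of_forall fun p => le_of_eq (hnormG p))
  -- Fubini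
  have hstep2 : (∫ p : Ed d × Ed d, cexp ((Ar p.1 : ℝ) + (Ai p.1 : ℝ) * I) *
        cexp (((-(π * (b+1) * ‖p.2‖ ^ 2) + 2 * π * ⟪z.2, p.2⟫ : ℝ)) +
          ((2 * π * ⟪c • p.1 - ζ.2, p.2⟫ : ℝ)) * I)) =
      ∫ t1 : Ed d, ∫ t2 : Ed d, cexp ((Ar t1 : ℝ) + (Ai t1 : ℝ) * I) *
        cexp (((-(π * (b+1) * ‖t2‖ ^ 2) + 2 * π * ⟪z.2, t2⟫ : ℝ)) +
          ((2 * π * ⟪c • t1 - ζ.2, t2⟫ : ℝ)) * I) := by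
    rw [show (volume : Measure (Ed d × Ed d)) = Measure.prod volume volume from
      Measure.volume_eq_prod _ _] at hInt ⊢
    exact integral_prod _ hInt
  -- inner Gaussian integral
  have hB2 : (0:ℝ) < π * (b+1) := by positivity
  have hBK : (0:ℝ) < π * K / (b+1) := by positivity
  have hstep3 : ∀ t1 : Ed d,
      (∫ t2 : Ed d, cexp ((Ar t1 : ℝ) + (Ai t1 : ℝ) * I) *
        cexp (((-(π * (b+1) * ‖t2‖ ^ 2) + 2 * π * ⟪z.2, t2⟫ : ℝ)) +
          ((2 * π * ⟪c • t1 - ζ.2, t2⟫ : ℝ)) * I)) =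
      cexp ((Ar t1 : ℝ) + (Ai t1 : ℝ) * I) *
        (((π / (π * (b+1))) ^ ((d : ℝ) / 2) : ℝ) *
          cexp ((((2*π) ^ 2 * ‖z.2‖ ^ 2 - (2*π) ^ 2 * ‖c • t1 - ζ.2‖ ^ 2) / (4 * (π * (b+1))) : ℝ) +
            ((2 * (2*π) * (2*π) * ⟪z.2, c • t1 - ζ.2⟫) / (4 * (π * (b+1))) : ℝ) * I)) := by
    intro t1
    rw [integral_const_mul, key d hB2 (2*π) (2*π) z.2 (c • t1 - ζ.2)]
  -- rearrange the t1-integrand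
  have hre : ∀ t1 : Ed d, Ar t1 +
      ((2*π) ^ 2 * ‖z.2‖ ^ 2 - (2*π) ^ 2 * ‖c • t1 - ζ.2‖ ^ 2) / (4 * (π * (b+1))) =
      (-(π * ‖z.1‖ ^ 2) - π * ‖z.2‖ ^ 2 + π * ‖z.2‖ ^ 2 / (b+1) - π * ‖ζ.2‖ ^ 2 / (b+1)) +
        (-(π * K / (b+1) * ‖t1‖ ^ 2) + 2 * π * ⟪u₁, t1⟫) := by
    intro t1
    simp only [hAr, hu₁, hKdef]
    have hcs : ‖c • t1‖ ^ 2 = c ^ 2 * ‖t1‖ ^ 2 := by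
      rw [norm_smul, mul_pow, Real.norm_eq_abs, _root_.sq_abs]
    rw [hn t1 z.1, hn (c • t1) ζ.2, inner_add_left, real_inner_smul_right,
      real_inner_smul_left, hcs]
    have hπ : (π:ℝ) ≠ 0 := Real.pi_ne_zero
    field_simp
    ring
  have him : ∀ t1 : Ed d, Ai t1 +
      (2 * (2*π) * (2*π) * ⟪z.2, c • t1 - ζ.2⟫) / (4 * (π * (b+1))) =
      (-(2 * π * ⟪z.2, ζ.2⟫ / (b+1))) + 2 * π * ⟪u₂, t1⟫ := by
    intro t1
    simp only [hAi, hu₂]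
    rw [inner_sub_right, real_inner_smul_right, inner_sub_left, real_inner_smul_left]
    have hπ : (π:ℝ) ≠ 0 := Real.pi_ne_zero
    field_simp
    ring
  have hcomb : ∀ r s r' s' : ℝ, ((r:ℂ) + (s:ℂ) * I) + ((r':ℂ) + (s':ℂ) * I) =
      ((r + r' : ℝ) : ℂ) + ((s + s' : ℝ) : ℂ) * I := by
    intros; push_cast; ring
  have hstep4 : ∀ t1 : Ed d,
      cexp ((Ar t1 : ℝ) + (Ai t1 : ℝ) * I) *
        (((π / (π * (b+1))) ^ ((d : ℝ) / 2) : ℝ) *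
          cexp ((((2*π) ^ 2 * ‖z.2‖ ^ 2 - (2*π) ^ 2 * ‖c • t1 - ζ.2‖ ^ 2) / (4 * (π * (b+1))) : ℝ) +
            ((2 * (2*π) * (2*π) * ⟪z.2, c • t1 - ζ.2⟫) / (4 * (π * (b+1))) : ℝ) * I)) =
      (((π / (π * (b+1))) ^ ((d : ℝ) / 2) : ℝ) *
        cexp (((-(π * ‖z.1‖ ^ 2) - π * ‖z.2‖ ^ 2 + π * ‖z.2‖ ^ 2 / (b+1)
            - π * ‖ζ.2‖ ^ 2 / (b+1) : ℝ)) + ((-(2 * π * ⟪z.2, ζ.2⟫ / (b+1)) : ℝ)) * I)) *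
        cexp (((-(π * K / (b+1) * ‖t1‖ ^ 2) + 2 * π * ⟪u₁, t1⟫ : ℝ)) +
          ((2 * π * ⟪u₂, t1⟫ : ℝ)) * I) := by
    intro t1
    conv_lhs => rw [mul_left_comm, ← Complex.exp_add]
    conv_rhs => rw [mul_assoc, ← Complex.exp_add]
    congr 1
    rw [hcomb, hcomb, hre t1, him t1]
  -- outer Gaussian integral
  have hstep5 : (∫ t1 : Ed d, ∫ t2 : Ed d, cexp ((Ar t1 : ℝ) + (Ai t1 : ℝ) * I) *
        cexp (((-(π * (b+1) * ‖t2‖ ^ 2) + 2 * π * ⟪z.2, t2⟫ : ℝ)) +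
          ((2 * π * ⟪c • t1 - ζ.2, t2⟫ : ℝ)) * I)) =
      (((π / (π * (b+1))) ^ ((d : ℝ) / 2) : ℝ) *
        cexp (((-(π * ‖z.1‖ ^ 2) - π * ‖z.2‖ ^ 2 + π * ‖z.2‖ ^ 2 / (b+1)
            - π * ‖ζ.2‖ ^ 2 / (b+1) : ℝ)) + ((-(2 * π * ⟪z.2, ζ.2⟫ / (b+1)) : ℝ)) * I)) *
        (((π / (π * K / (b+1))) ^ ((d : ℝ) / 2) : ℝ) *
          cexp ((((2*π) ^ 2 * ‖u₁‖ ^ 2 - (2*π) ^ 2 * ‖u₂‖ ^ 2) / (4 * (π * K / (b+1))) : ℝ) +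
            ((2 * (2*π) * (2*π) * ⟪u₁, u₂⟫) / (4 * (π * K / (b+1))) : ℝ) * I)) := by
    calc (∫ t1 : Ed d, ∫ t2 : Ed d, cexp ((Ar t1 : ℝ) + (Ai t1 : ℝ) * I) *
        cexp (((-(π * (b+1) * ‖t2‖ ^ 2) + 2 * π * ⟪z.2, t2⟫ : ℝ)) +
          ((2 * π * ⟪c • t1 - ζ.2, t2⟫ : ℝ)) * I))
        = ∫ t1 : Ed d, (((π / (π * (b+1))) ^ ((d : ℝ) / 2) : ℝ) *
            cexp (((-(π * ‖z.1‖ ^ 2) - π * ‖z.2‖ ^ 2 + π * ‖z.2‖ ^ 2 / (b+1)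
                - π * ‖ζ.2‖ ^ 2 / (b+1) : ℝ)) + ((-(2 * π * ⟪z.2, ζ.2⟫ / (b+1)) : ℝ)) * I)) *
            cexp (((-(π * K / (b+1) * ‖t1‖ ^ 2) + 2 * π * ⟪u₁, t1⟫ : ℝ)) +
              ((2 * π * ⟪u₂, t1⟫ : ℝ)) * I) := by
          refine integral_congr_ae (Filter.Eventually.of_forall fun t1 => ?_)
          dsimp only
          rw [hstep3 t1, hstep4 t1]
      _ = _ := by rw [integral_const_mul, key d hBK (2*π) (2*π) u₁ u₂]
  rw [hstep1, hstep2, hstep5]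
  rw [norm_mul, norm_mul, norm_mul, Complex.norm_real, Complex.norm_real,
    norm_cexp_mix, norm_cexp_mix, Real.norm_eq_abs, Real.norm_eq_abs,
    _root_.abs_of_nonneg (Real.rpow_nonneg (by positivity) _),
    _root_.abs_of_nonneg (Real.rpow_nonneg (by positivity) _),
    mul_mul_mul_comm, ← Real.exp_add]
  congr 1
  · rw [← Real.mul_rpow (by positivity) (by positivity),
      show π / (π * (b+1)) * (π / (π * K / (b+1))) = K⁻¹ by field_simp,
      Real.inv_rpow hK.le, ← Real.rpow_neg hK.le, ← neg_div]
  · congr 1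
    have h1 : ‖u₁‖ ^ 2 = ‖z.1‖ ^ 2 + 2 * (c/(b+1)) * ⟪z.1, ζ.2⟫ + (c/(b+1)) ^ 2 * ‖ζ.2‖ ^ 2 := by
      rw [hu₁, norm_add_sq_real, real_inner_smul_right, norm_smul, mul_pow,
        Real.norm_eq_abs, _root_.sq_abs]
      ring
    have h2 : ‖u₂‖ ^ 2 = (c/(b+1)) ^ 2 * ‖z.2‖ ^ 2 - 2 * (c/(b+1)) * ⟪z.2, ζ.1⟫ + ‖ζ.1‖ ^ 2 := by
      rw [hu₂, @norm_sub_sq_real, real_inner_smul_left, norm_smul, mul_pow,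
        Real.norm_eq_abs, _root_.sq_abs]
      ring
    rw [h1, h2, hKdef]
    field_simp
    ring


end
end

section
/- For all λ > 0 and 1 ≤ r, s ≤ ∞, the modulation space norm of the dilated Gaussian φ_λ(x) = e^{−π λ x²} on R^d satisfies ||φ_λ||_{M^{r,s}} ≍ λ^{−d/(2r)} (λ+1)^{−(d/2)(1 − 1/r − 1/s)}, with implied constants independent of λ. -/
open MeasureTheory Complex
open scoped RealInnerProductSpace ENNReal NNReal

noncomputable section

open Real in
lemma norm_stft_gauss {d : ℕ} {lam : ℝ} (hl : 0 < lam) (x ξ : Ed d) :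
    ‖STFT gauss (fun t : Ed d => (Real.exp (-(Real.pi * lam * ‖t‖ ^ 2)) : ℂ)) x ξ‖ =
      (lam + 1) ^ (-(d:ℝ)/2) *
        (Real.exp (-(Real.pi * lam / (lam + 1) * ‖x‖ ^ 2)) *
          Real.exp (-(Real.pi / (lam + 1) * ‖ξ‖ ^ 2))) := by
  have hl1 : (0:ℝ) < lam + 1 := by linarith
  have hl1' : (lam + 1 : ℝ) ≠ 0 := ne_of_gt hl1
  have hlC : ((lam:ℂ) + 1) ≠ 0 := by
    intro h
    have := congrArg Complex.re h
    simp at this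
    linarith
  set b : ℂ := ((Real.pi * (lam + 1) : ℝ) : ℂ) with hb
  have hbre : 0 < b.re := by
    simp [hb]
    positivity
  set c : ℂ := -(2 * Real.pi * Complex.I) with hc
  set a : Ed d := (lam + 1)⁻¹ • x with ha
  set K : ℂ := Complex.exp (c * (⟪ξ, a⟫ : ℝ) - (Real.pi * lam / (lam + 1) * ‖x‖ ^ 2 : ℝ)) with hK
  have key : STFT gauss (fun t : Ed d => (Real.exp (-(Real.pi * lam * ‖t‖ ^ 2)) : ℂ)) x ξ
      = (∫ t : Ed d, Complex.exp (-b * ‖t‖ ^ 2 + c * (⟪ξ, t⟫ : ℝ))) * K := by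
    rw [STFT, ← integral_mul_const, ← integral_sub_right_eq_self
      (fun t => Complex.exp (-b * ‖t‖ ^ 2 + c * (⟪ξ, t⟫ : ℝ)) * K) a]
    congr 1 with t
    rw [gauss, e2, Complex.conj_ofReal, hK, Complex.ofReal_exp, Complex.ofReal_exp,
      ← Complex.exp_add, ← Complex.exp_add, ← Complex.exp_add]
    congr 1
    have hnorm : ‖t - x‖ ^ 2 = ‖t‖^2 - 2 * ⟪t, x⟫ + ‖x‖^2 := norm_sub_sq_real t x
    have hna : ‖t - a‖ ^ 2 = ‖t‖^2 - 2 * (lam+1)⁻¹ * ⟪t, x⟫ + ((lam+1)⁻¹)^2 * ‖x‖^2 := by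
      rw [norm_sub_sq_real, ha, real_inner_smul_right, norm_smul]
      simp [mul_pow, abs_of_pos (inv_pos.mpr hl1)]
      ring
    have hia : (⟪ξ, t - a⟫ : ℝ) = ⟪ξ, t⟫ - ⟪ξ, a⟫ := inner_sub_right _ _ _
    rw [hia]
    set M := ‖t - x‖ ^ 2 with hM
    set N := ‖t - a‖ ^ 2 with hN
    set u1 := ‖t‖ ^ 2 with hu1
    set u2 : ℝ := ⟪t, x⟫ with hu2
    set u3 := ‖x‖ ^ 2 with hu3
    set v1 : ℝ := ⟪ξ, t⟫ with hv1
    set v2 : ℝ := ⟪ξ, a⟫ with hv2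
    have R1 : Real.pi * lam * u1 + Real.pi * M
        = Real.pi * (lam + 1) * N + Real.pi * lam / (lam + 1) * u3 := by
      rw [hnorm, hna]
      field_simp
      ring
    have R1C : (Real.pi : ℂ) * lam * u1 + Real.pi * M
        = Real.pi * (lam + 1) * N + Real.pi * lam / (lam + 1) * u3 := by
      exact_mod_cast congrArg Complex.ofReal R1
    have cN : ((‖t - a‖ : ℂ)) ^ 2 = ((N : ℝ) : ℂ) := by
      rw [hN]
      push_cast
      ring
    rw [hb, hc]
    push_cast
    linear_combination -R1C + ((Real.pi : ℂ) * lam + Real.pi) * cN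
  rw [key, GaussianFourier.integral_cexp_neg_mul_sq_norm_add hbre c ξ]
  rw [norm_mul, norm_mul, hK]
  have h1 : ‖(↑Real.pi / b) ^ (Module.finrank ℝ (Ed d) / 2 : ℂ)‖ = (lam + 1) ^ (-(d:ℝ)/2) := by
    have hπb : (↑Real.pi / b) = (((lam+1)⁻¹ : ℝ) : ℂ) := by
      rw [hb]
      push_cast
      rw [div_eq_iff (by exact mul_ne_zero (by exact_mod_cast Real.pi_ne_zero) hlC)]
      field_simp
    have hexp : ((Module.finrank ℝ (Ed d) : ℂ)) / 2 = (((d:ℝ)/2 : ℝ) : ℂ) := by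
      rw [finrank_euclideanSpace_fin]
      push_cast
      ring
    rw [hπb, hexp,
      Complex.norm_cpow_eq_rpow_re_of_pos (by positivity), Complex.ofReal_re,
      Real.inv_rpow hl1.le, ← Real.rpow_neg hl1.le, neg_div]
  have h2 : ‖Complex.exp (c ^ 2 * ‖ξ‖ ^ 2 / (4 * b))‖
      = Real.exp (-(Real.pi / (lam + 1) * ‖ξ‖ ^ 2)) := by
    have : c ^ 2 * (‖ξ‖:ℂ) ^ 2 / (4 * b) = ((-(Real.pi / (lam + 1) * ‖ξ‖ ^ 2) : ℝ) : ℂ) := by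
      rw [hc, hb]
      push_cast
      rw [div_eq_iff (by
        apply mul_ne_zero
        · norm_num
        · exact mul_ne_zero (by exact_mod_cast Real.pi_ne_zero) hlC)]
      field_simp
      ring_nf
      simp [Complex.I_sq]
    rw [this, ← Complex.ofReal_exp, Complex.norm_real]
    simp [Real.abs_exp]
  have h3 : ‖Complex.exp (c * (⟪ξ, a⟫ : ℝ) - (Real.pi * lam / (lam + 1) * ‖x‖ ^ 2 : ℝ))‖
      = Real.exp (-(Real.pi * lam / (lam + 1) * ‖x‖ ^ 2)) := by
    rw [Complex.norm_exp]
    congr 1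
    rw [Complex.sub_re, Complex.ofReal_re]
    simp [hc]
  rw [h1, h2, h3]
  ring

lemma integrable_gauss {d : ℕ} {b : ℝ} (hb : 0 < b) :
    Integrable (fun x : Ed d => Real.exp (-(b * ‖x‖^2))) := by
  have h := (GaussianFourier.integrable_cexp_neg_mul_sq_norm_add (V := Ed d) (b := (b:ℂ))
    (by simpa using hb) 0 0).norm
  refine h.congr (Filter.Eventually.of_forall fun v => ?_)
  simp [Complex.norm_exp, ← Complex.ofReal_pow]

lemma lpE_gauss {d : ℕ} {p : ℝ≥0∞} (hp1 : 1 ≤ p) (hp : p ≠ ∞) {a : ℝ} (ha : 0 < a) :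
    lpE p (fun x : Ed d => ENNReal.ofReal (Real.exp (-(a * ‖x‖^2)))) =
      ENNReal.ofReal ((Real.pi / (p.toReal * a)) ^ ((d:ℝ) / (2 * p.toReal))) := by
  have hp0 : 0 < p.toReal := ENNReal.toReal_pos (by positivity) hp
  rw [lpE, if_neg hp]
  have h1 : ∀ x : Ed d, (ENNReal.ofReal (Real.exp (-(a * ‖x‖^2)))) ^ p.toReal
      = ENNReal.ofReal (Real.exp (-(p.toReal * a * ‖x‖^2))) := by
    intro x
    rw [ENNReal.ofReal_rpow_of_pos (Real.exp_pos _)]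
    congr 1
    rw [← Real.exp_mul]
    ring_nf
  simp_rw [h1]
  rw [← MeasureTheory.ofReal_integral_eq_lintegral_ofReal
    (integrable_gauss (by positivity)) (Filter.Eventually.of_forall fun x => (Real.exp_pos _).le)]
  simp_rw [show ∀ x : Ed d, (-(p.toReal * a * ‖x‖ ^ 2)) = (-(p.toReal * a) * ‖x‖ ^ 2)
    from fun _ => by ring]
  rw [GaussianFourier.integral_rexp_neg_mul_sq_norm (by positivity), finrank_euclideanSpace_fin]
  rw [← ENNReal.ofReal_rpow_of_pos (show (0:ℝ) < Real.pi / (p.toReal * a) by positivity),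
    ← ENNReal.rpow_mul,
    ENNReal.ofReal_rpow_of_pos (show (0:ℝ) < Real.pi / (p.toReal * a) by positivity)]
  congr 1
  field_simp

lemma lpE_gauss_top {d : ℕ} {a : ℝ} (ha : 0 < a) :
    lpE ∞ (fun x : Ed d => ENNReal.ofReal (Real.exp (-(a * ‖x‖^2)))) = 1 := by
  rw [lpE, if_pos rfl]
  apply le_antisymm
  · refine essSup_le_of_ae_le _ ?_
    refine Filter.Eventually.of_forall fun x => ?_
    calc ENNReal.ofReal (Real.exp (-(a * ‖x‖^2))) ≤ ENNReal.ofReal 1 := by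
          apply ENNReal.ofReal_le_ofReal
          rw [Real.exp_le_one_iff]
          exact neg_nonpos.mpr (by positivity)
      _ = 1 := ENNReal.ofReal_one
  · rw [essSup_eq_sInf]
    refine le_sInf fun c hc => ?_
    by_contra hlt
    push_neg at hlt
    have hc1 : c ≠ ∞ := ne_top_of_lt (lt_of_lt_of_le hlt le_top)
    set c' := c.toReal with hc'
    have hcc : c = ENNReal.ofReal c' := (ENNReal.ofReal_toReal hc1).symm
    -- find an open ball on which the function exceeds c
    obtain ⟨δ, hδ, hball⟩ : ∃ δ : ℝ, 0 < δ ∧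
        ∀ x : Ed d, ‖x‖ < δ → c < ENNReal.ofReal (Real.exp (-(a * ‖x‖^2))) := by
      rcases le_or_gt c' 0 with h0 | h0
      · refine ⟨1, one_pos, fun x _ => ?_⟩
        rw [hcc]
        calc ENNReal.ofReal c' = 0 := by simp [ENNReal.ofReal_eq_zero.mpr h0]
          _ < _ := by simp [Real.exp_pos]
      · have hc'1 : c' < 1 := by
          have := ENNReal.toReal_lt_toReal hc1 (by norm_num : (1:ℝ≥0∞) ≠ ∞) |>.mpr hlt
          simpa using this
        have hlog : 0 < -Real.log c' := by
          have := Real.log_neg h0 hc'1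
          linarith
        refine ⟨Real.sqrt (-Real.log c' / a), Real.sqrt_pos.mpr (by positivity), fun x hx => ?_⟩
        rw [hcc]
        apply ENNReal.ofReal_lt_ofReal_iff (Real.exp_pos _) |>.mpr
        rw [← Real.exp_log h0, Real.exp_lt_exp]
        have hx2 : ‖x‖^2 < -Real.log c' / a := by
          have h1 : ‖x‖^2 < Real.sqrt (-Real.log c' / a) ^ 2 := by
            apply pow_lt_pow_left₀ hx (norm_nonneg _)
            norm_num
          rwa [Real.sq_sqrt (by positivity)] at h1
        have h3 : ‖x‖^2 * a < -Real.log c' := (lt_div_iff₀ ha).mp hx2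
        linarith
    have hsub : Metric.ball (0 : Ed d) δ ⊆ {x | c < ENNReal.ofReal (Real.exp (-(a * ‖x‖^2)))} := by
      intro x hx
      simp only [Metric.mem_ball, dist_zero_right] at hx
      exact hball x hx
    simp only [Set.mem_setOf_eq] at hc
    have h0' : volume (Metric.ball (0 : Ed d) δ) ≤
        volume {x | c < ENNReal.ofReal (Real.exp (-(a * ‖x‖^2)))} := measure_mono hsub
    rw [hc] at h0'
    exact (Metric.measure_ball_pos volume (0 : Ed d) hδ).ne' (le_antisymm h0' zero_le)

lemma lpE_const_mul {α : Type*} [MeasureSpace α] {p : ℝ≥0∞} (hp1 : 1 ≤ p) (C : ℝ≥0∞)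
    (hC : C ≠ ∞) (f : α → ℝ≥0∞) : lpE p (fun x => C * f x) = C * lpE p f := by
  rcases eq_or_ne p ∞ with hp | hp
  · rw [hp, lpE, lpE, if_pos rfl, if_pos rfl, ENNReal.essSup_const_mul]
  · have hp0 : 0 < p.toReal := ENNReal.toReal_pos (by positivity) hp
    rw [lpE, lpE, if_neg hp, if_neg hp]
    simp_rw [ENNReal.mul_rpow_of_nonneg _ _ hp0.le]
    rw [lintegral_const_mul' _ _ (by simp [ENNReal.rpow_lt_top_of_nonneg hp0.le hC, (ENNReal.rpow_lt_top_of_nonneg hp0.le hC).ne] : C ^ p.toReal ≠ ∞)]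
    rw [ENNReal.mul_rpow_of_nonneg _ _ (by positivity : (0:ℝ) ≤ 1 / p.toReal)]
    rw [← ENNReal.rpow_mul, mul_one_div, div_self hp0.ne', ENNReal.rpow_one]

lemma fac1 {p m L dd : ℝ} (hp : 0 ≤ p) (hm : 0 < m) (hL : 0 < L) :
    (m/(p*L)) ^ (dd/(2*p)) = p ^ (-(dd/(2*p))) * L ^ (-(dd/(2*p))) * m ^ (dd/(2*p)) := by
  rcases eq_or_lt_of_le hp with h0 | h0
  · simp [← h0]
  · rw [Real.div_rpow hm.le (by positivity), Real.mul_rpow h0.le hL.le,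
      Real.rpow_neg h0.le, Real.rpow_neg hL.le]
    field_simp

lemma fac2 {p m dd : ℝ} (hp : 0 ≤ p) (hm : 0 < m) :
    (m/p) ^ (dd/(2*p)) = p ^ (-(dd/(2*p))) * m ^ (dd/(2*p)) := by
  rcases eq_or_lt_of_le hp with h0 | h0
  · simp [← h0]
  · rw [Real.div_rpow hm.le h0.le, Real.rpow_neg h0.le]
    field_simp

lemma real_key (d : ℕ) (pr ps L : ℝ) (hpr : 0 ≤ pr) (hps : 0 ≤ ps) (hL : 0 < L) :
    ((L + 1) ^ (-(d:ℝ)/2)) * ((L + 1)/(pr*L)) ^ ((d:ℝ)/(2*pr)) *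
        ((L + 1)/ps) ^ ((d:ℝ)/(2*ps))
      = (pr ^ (-((d:ℝ)/(2*pr))) * ps ^ (-((d:ℝ)/(2*ps)))) *
        (L ^ (-(d:ℝ)/(2*pr)) * (L + 1) ^ (-((d:ℝ)/2) * (1 - 1/pr - 1/ps))) := by
  have hm : (0:ℝ) < L + 1 := by linarith
  have hE : -((d:ℝ)/2) * (1 - 1/pr - 1/ps) = -(d:ℝ)/2 + ((d:ℝ)/(2*pr) + (d:ℝ)/(2*ps)) := by
    ring
  rw [hE, fac1 hpr hm hL, fac2 hps hm, Real.rpow_add hm, Real.rpow_add hm]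
  simp only [neg_div]
  ring

lemma Mnorm_gauss (d : ℕ) (r s : ℝ≥0∞) (hr : 1 ≤ r) (hs : 1 ≤ s) {lam : ℝ} (hl : 0 < lam) :
    Mnorm r s (fun _ _ => 1) (fun x : Ed d => (Real.exp (-(Real.pi * lam * ‖x‖ ^ 2)) : ℂ)) =
      ENNReal.ofReal ((lam + 1) ^ (-(d:ℝ)/2)) *
      (if r = ∞ then 1 else
        ENNReal.ofReal ((Real.pi / (r.toReal * (Real.pi * lam / (lam + 1)))) ^
          ((d:ℝ) / (2 * r.toReal)))) *
      (if s = ∞ then 1 else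
        ENNReal.ofReal ((Real.pi / (s.toReal * (Real.pi / (lam + 1)))) ^
          ((d:ℝ) / (2 * s.toReal)))) := by
  have hl1 : (0:ℝ) < lam + 1 := by linarith
  have hα : 0 < Real.pi * lam / (lam + 1) := by positivity
  have hβ : 0 < Real.pi / (lam + 1) := by positivity
  set Ar : ℝ≥0∞ := if r = ∞ then 1 else
      ENNReal.ofReal ((Real.pi / (r.toReal * (Real.pi * lam / (lam + 1)))) ^
        ((d:ℝ) / (2 * r.toReal))) with hAr
  have hArt : Ar ≠ ∞ := by
    rw [hAr]
    split_ifs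
    · exact ENNReal.one_ne_top
    · exact ENNReal.ofReal_ne_top
  set K : ℝ≥0∞ := ENNReal.ofReal ((lam + 1) ^ (-(d:ℝ)/2)) with hKd
  rw [Mnorm]
  have hin : ∀ ξ : Ed d,
      (lpE r fun x => (‖STFT gauss (fun x : Ed d =>
          (Real.exp (-(Real.pi * lam * ‖x‖ ^ 2)) : ℂ)) x ξ‖₊ : ℝ≥0∞) * ENNReal.ofReal 1)
      = (K * Ar) * ENNReal.ofReal (Real.exp (-(Real.pi / (lam + 1) * ‖ξ‖ ^ 2))) := by
    intro ξ
    have hpt : ∀ x : Ed d, (‖STFT gauss (fun x : Ed d =>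
          (Real.exp (-(Real.pi * lam * ‖x‖ ^ 2)) : ℂ)) x ξ‖₊ : ℝ≥0∞) * ENNReal.ofReal 1
        = (K * ENNReal.ofReal (Real.exp (-(Real.pi / (lam + 1) * ‖ξ‖ ^ 2)))) *
            ENNReal.ofReal (Real.exp (-(Real.pi * lam / (lam + 1) * ‖x‖ ^ 2))) := by
      intro x
      rw [ENNReal.ofReal_one, mul_one, ← enorm_eq_nnnorm, ← ofReal_norm, norm_stft_gauss hl,
        ENNReal.ofReal_mul (by positivity), ENNReal.ofReal_mul (by positivity), hKd]
      ring
    simp_rw [hpt]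
    rw [lpE_const_mul hr _ (by
        exact ENNReal.mul_ne_top (by simp [hKd]) ENNReal.ofReal_ne_top) _]
    rw [hAr]
    split_ifs with h
    · rw [h, lpE_gauss_top hα]
      ring
    · rw [lpE_gauss hr h hα]
      ring
  simp_rw [hin]
  rw [lpE_const_mul hs _ (ENNReal.mul_ne_top (by simp [hKd]) hArt) _]
  split_ifs with h
  · rw [h, lpE_gauss_top hβ]
  · rw [lpE_gauss hs h hβ]

lemma pos_aux (d : ℕ) : ∀ p : ℝ, 0 ≤ p → 0 < p ^ (-((d:ℝ)/(2*p))) := by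
  intro p hp
  rcases eq_or_lt_of_le hp with h0 | h0
  · simp [← h0]
  · exact Real.rpow_pos_of_pos h0 _


/-- Modulation norm of the dilated Gaussian `φ_λ`, with constants independent of `λ`
(the convention `1/∞ = 0` is realized via `ENNReal.toReal`). -/
theorem modulation_norm_dilated_gaussian (d : ℕ) (r s : ℝ≥0∞) (hr : 1 ≤ r) (hs : 1 ≤ s) :
    ∃ C1 C2 : ℝ≥0∞, 0 < C1 ∧ C2 < ∞ ∧
      ∀ lam : ℝ, 0 < lam →
        C1 * ENNReal.ofReal
            (lam ^ (-(d : ℝ) / (2 * r.toReal)) *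
              (lam + 1) ^ (-((d : ℝ) / 2) * (1 - 1 / r.toReal - 1 / s.toReal))) ≤
          Mnorm r s (fun _ _ => 1)
            (fun x : Ed d => (Real.exp (-(Real.pi * lam * ‖x‖ ^ 2)) : ℂ)) ∧
        Mnorm r s (fun _ _ => 1)
            (fun x : Ed d => (Real.exp (-(Real.pi * lam * ‖x‖ ^ 2)) : ℂ)) ≤
          C2 * ENNReal.ofReal
            (lam ^ (-(d : ℝ) / (2 * r.toReal)) *
              (lam + 1) ^ (-((d : ℝ) / 2) * (1 - 1 / r.toReal - 1 / s.toReal))) := by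
  set pr := r.toReal with hprd
  set ps := s.toReal with hpsd
  have hpr0 : 0 ≤ pr := ENNReal.toReal_nonneg
  have hps0 : 0 ≤ ps := ENNReal.toReal_nonneg
  set C : ℝ≥0∞ :=
    ENNReal.ofReal (pr ^ (-((d:ℝ)/(2*pr))) * ps ^ (-((d:ℝ)/(2*ps)))) with hC
  have hCpos : 0 < C :=
    ENNReal.ofReal_pos.mpr (mul_pos (pos_aux d pr hpr0) (pos_aux d ps hps0))
  refine ⟨C, C, hCpos, ENNReal.ofReal_lt_top, fun lam hlam => ?_⟩
  have hm1 : (0:ℝ) < lam + 1 := by linarith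
  have key : Mnorm r s (fun _ _ => 1)
      (fun x : Ed d => (Real.exp (-(Real.pi * lam * ‖x‖ ^ 2)) : ℂ))
      = C * ENNReal.ofReal
          (lam ^ (-(d : ℝ) / (2 * pr)) *
            (lam + 1) ^ (-((d : ℝ) / 2) * (1 - 1 / pr - 1 / ps))) := by
    rw [Mnorm_gauss d r s hr hs hlam]
    have hArr : (if r = ∞ then (1:ℝ≥0∞) else
        ENNReal.ofReal ((Real.pi / (pr * (Real.pi * lam / (lam + 1)))) ^ ((d:ℝ)/(2*pr))))
        = ENNReal.ofReal (((lam + 1)/(pr*lam)) ^ ((d:ℝ)/(2*pr))) := by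
      split_ifs with h
      · have h0 : pr = 0 := by simp [hprd, h]
        simp [h0]
      · have hpr : 0 < pr := ENNReal.toReal_pos (one_pos.trans_le hr).ne' h
        congr 2
        rw [div_eq_div_iff (by positivity) (by positivity)]
        field_simp
    have hBss : (if s = ∞ then (1:ℝ≥0∞) else
        ENNReal.ofReal ((Real.pi / (ps * (Real.pi / (lam + 1)))) ^ ((d:ℝ)/(2*ps))))
        = ENNReal.ofReal (((lam + 1)/ps) ^ ((d:ℝ)/(2*ps))) := by
      split_ifs with h
      · have h0 : ps = 0 := by simp [hpsd, h]
        simp [h0]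
      · have hps : 0 < ps := ENNReal.toReal_pos (one_pos.trans_le hs).ne' h
        congr 2
        rw [div_eq_div_iff (by positivity) (by positivity)]
        field_simp
    rw [hArr, hBss, ← ENNReal.ofReal_mul (by positivity), ← ENNReal.ofReal_mul (by positivity),
      hC, ← ENNReal.ofReal_mul (by positivity)]
    exact congrArg ENNReal.ofReal (real_key d pr ps lam hpr0 hps0 hlam)
  exact ⟨key.ge, key.le⟩

end
end
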